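/- For all x, y in [-R, R], the expectation E_{(w,b)}[(wx+b)_+ · (wy+b)_+], where w is uniform on {-1,1} and b uniform on [-R,R], equals R²/6 + xy/2 + |x-y|³/(24R). -/

import Mathlib

open MeasureTheory intervalIntegral

lemma cont_aux (a c : ℝ) : Continuous fun b : ℝ => max (a + b) 0 * max (c + b) 0 := by
  fun_prop

lemma key (R a c : ℝ) (h1 : -R ≤ a) (h2 : a ≤ c) (h3 : c ≤ R) :
    ∫ b in (-R)..R, max (a + b) 0 * max (c + b) 0
      = (R + a) ^ 3 / 3 + (c - a) * (R + a) ^ 2 / 2 := by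
  have hRa : (-R : ℝ) ≤ -a := by linarith
  have haR : (-a : ℝ) ≤ R := by linarith
  have hcont := cont_aux a c
  have hsplit := intervalIntegral.integral_add_adjacent_intervals
    (a := -R) (b := -a) (c := R)
    (hcont.intervalIntegrable (μ := volume) _ _) (hcont.intervalIntegrable (μ := volume) _ _)
  rw [← hsplit]
  have h0 : (∫ b in (-R)..(-a), max (a + b) 0 * max (c + b) 0) = 0 := by
    rw [intervalIntegral.integral_congr (g := fun _ => (0:ℝ))]
    · simp
    · intro b hb
      rw [Set.uIcc_of_le hRa] at hb
      have : a + b ≤ 0 := by linarith [hb.2]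
      simp [max_eq_right this]
  have h1' : (∫ b in (-a)..R, max (a + b) 0 * max (c + b) 0)
      = ∫ b in (-a)..R, (a + b) * (c + b) := by
    apply intervalIntegral.integral_congr
    intro b hb
    rw [Set.uIcc_of_le haR] at hb
    have hab : 0 ≤ a + b := by linarith [hb.1]
    have hcb : 0 ≤ c + b := by linarith [hb.1]
    simp [max_eq_left hab, max_eq_left hcb]
  rw [h0, h1', zero_add]
  have hderiv : ∀ x ∈ Set.uIcc (-a) R,
      HasDerivAt (fun b => b ^ 3 / 3 + (a + c) / 2 * b ^ 2 + a * c * b)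
        ((a + x) * (c + x)) x := by
    intro x _
    have h := (((hasDerivAt_pow 3 x).div_const 3).add
      ((hasDerivAt_pow 2 x).const_mul ((a + c) / 2))).add
      ((hasDerivAt_id x).const_mul (a * c))
    exact h.congr_deriv (by ring)
  rw [intervalIntegral.integral_eq_sub_of_hasDerivAt hderiv
      (by apply Continuous.intervalIntegrable; fun_prop)]
  ring

lemma main' (R x y : ℝ) (hR : 0 < R) (hx : x ∈ Set.Icc (-R) R) (hy : y ∈ Set.Icc (-R) R)
    (hxy : x ≤ y) :
    (1 / 2) * ((1 / (2 * R)) * ∫ b in (-R)..R, max (x + b) 0 * max (y + b) 0)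
      + (1 / 2) * ((1 / (2 * R)) * ∫ b in (-R)..R, max (-x + b) 0 * max (-y + b) 0)
    = R ^ 2 / 6 + x * y / 2 + |x - y| ^ 3 / (24 * R) := by
  obtain ⟨hx1, hx2⟩ := hx
  obtain ⟨hy1, hy2⟩ := hy
  have e1 := key R x y hx1 hxy hy2
  have e2' : (∫ b in (-R)..R, max (-x + b) 0 * max (-y + b) 0)
      = ∫ b in (-R)..R, max (-y + b) 0 * max (-x + b) 0 := by
    simp [mul_comm]
  have e2 := key R (-y) (-x) (by linarith) (by linarith) (by linarith)
  rw [e1, e2', e2, abs_of_nonpos (by linarith : x - y ≤ 0)]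
  have hR' : R ≠ 0 := ne_of_gt hR
  field_simp
  ring

/-- For `x, y ∈ [-R, R]`, with `w` uniform on `{-1, 1}` and `b` uniform on `[-R, R]`
independent, `E[(wx+b)_+ (wy+b)_+] = R²/6 + xy/2 + |x-y|³/(24R)`. -/
theorem stmt1 (R x y : ℝ) (hR : 0 < R) (hx : x ∈ Set.Icc (-R) R) (hy : y ∈ Set.Icc (-R) R) :
    (1 / 2) * ((1 / (2 * R)) * ∫ b in (-R)..R, max (x + b) 0 * max (y + b) 0)
      + (1 / 2) * ((1 / (2 * R)) * ∫ b in (-R)..R, max (-x + b) 0 * max (-y + b) 0)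
    = R ^ 2 / 6 + x * y / 2 + |x - y| ^ 3 / (24 * R) := by
  rcases le_total x y with h | h
  · exact main' R x y hR hx hy h
  · have := main' R y x hR hy hx h
    rw [abs_sub_comm y x, mul_comm y x] at this
    rw [← this]
    congr 2
    · congr 2
      simp [mul_comm]
    · congr 2
      simp [mul_comm]
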